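/- Under the additional flows, for all integers m, m′ ≥ 0 and p, p′ ∈ ℤ, with β̇_{mp} = β_{mp} or β̂_{mp} corresponding to Ḃ_{mp} = B_{mp} or B̂_{mp} respectively: ∂ψ(z)/∂β̇_{mp} = −(Ḃ_{mp})₋ ψ(z) and ∂ψ̂(z)/∂β̇_{mp} = (Ḃ_{mp})₊ ψ̂(z); ∂P/∂β̇_{mp} = [−(Ḃ_{mp})₋, P] and ∂P̂/∂β̇_{mp} = [(Ḃ_{mp})₊, P̂]; ∂M/∂β̇_{mp} = [−(Ḃ_{mp})₋, M] and ∂M̂/∂β̇_{mp} = [(Ḃ_{mp})₊, M̂]; ∂B_{m′p′}/∂β̇_{mp} = [−(Ḃ_{mp})₋, B_{m′p′}] and ∂B̂_{m′p′}/∂β̇_{mp} = [(Ḃ_{mp})₊, B̂_{m′p′}]. -/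

import Mathlib

/-!
STATEMENT 14: Under the additional flows ∂Φ/∂β̇_{mp} = −(Ḃ_{mp})₋Φ,
∂Φ̂/∂β̇_{mp} = (Ḃ_{mp})₊Φ̂ (β̇ = β, β̂ corresponding to Ḃ = B, B̂, where
B_{mp} = M^m P^p and B̂_{mp} = M̂^m P̂^{−p}), one has, for all m, m′ ≥ 0 and
p, p′ ∈ ℤ:
∂ψ/∂β̇_{mp} = −(Ḃ_{mp})₋ψ, ∂ψ̂/∂β̇_{mp} = (Ḃ_{mp})₊ψ̂;
∂P/∂β̇_{mp} = [−(Ḃ_{mp})₋, P], ∂P̂/∂β̇_{mp} = [(Ḃ_{mp})₊, P̂];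
∂M/∂β̇_{mp} = [−(Ḃ_{mp})₋, M], ∂M̂/∂β̇_{mp} = [(Ḃ_{mp})₊, M̂];
∂B_{m′p′}/∂β̇_{mp} = [−(Ḃ_{mp})₋, B_{m′p′}],
∂B̂_{m′p′}/∂β̇_{mp} = [(Ḃ_{mp})₊, B̂_{m′p′}].
-/

section AuxDer

variable {D : Type*} [Ring D] (d : D → D)

private lemma aux_d_one (hmul : ∀ x y, d (x * y) = d x * y + x * d y) :
    d 1 = 0 := by
  have h := hmul 1 1
  simp only [one_mul, mul_one] at h
  have h2 : d 1 + 0 = d 1 + d 1 := by rw [add_zero]; exact h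
  exact (add_left_cancel h2).symm

private lemma aux_d_inv (hmul : ∀ x y, d (x * y) = d x * y + x * d y)
    (u : Dˣ) :
    d ((u⁻¹ : Dˣ) : D) = -((u⁻¹ : Dˣ) : D) * d (u : D) * ((u⁻¹ : Dˣ) : D) := by
  have h1 : d ((u : D) * ((u⁻¹ : Dˣ) : D)) = 0 := by
    rw [Units.mul_inv]; exact aux_d_one d hmul
  rw [hmul] at h1
  have h2 : (u : D) * d ((u⁻¹ : Dˣ) : D) = -(d (u : D) * ((u⁻¹ : Dˣ) : D)) :=
    eq_neg_of_add_eq_zero_right h1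
  calc d ((u⁻¹ : Dˣ) : D)
      = ((u⁻¹ : Dˣ) : D) * ((u : D) * d ((u⁻¹ : Dˣ) : D)) := by
        rw [← mul_assoc, Units.inv_mul, one_mul]
    _ = _ := by rw [h2]; noncomm_ring

private lemma aux_comm_mul (hmul : ∀ x y, d (x * y) = d x * y + x * d y)
    (X a b : D) (ha : d a = X * a - a * X) (hb : d b = X * b - b * X) :
    d (a * b) = X * (a * b) - (a * b) * X := by
  rw [hmul, ha, hb]; noncomm_ring

private lemma aux_comm_inv (hmul : ∀ x y, d (x * y) = d x * y + x * d y)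
    (X : D) (u : Dˣ) (hu : d (u : D) = X * (u : D) - (u : D) * X) :
    d ((u⁻¹ : Dˣ) : D) = X * ((u⁻¹ : Dˣ) : D) - ((u⁻¹ : Dˣ) : D) * X := by
  rw [aux_d_inv d hmul u, hu]
  have h1 : ((u⁻¹ : Dˣ) : D) * (u : D) = 1 := Units.inv_mul u
  have h2 : (u : D) * ((u⁻¹ : Dˣ) : D) = 1 := Units.mul_inv u
  have h3 : -((u⁻¹ : Dˣ) : D) * (X * (u : D) - (u : D) * X) * ((u⁻¹ : Dˣ) : D)
      = -(((u⁻¹ : Dˣ) : D) * X * ((u : D) * ((u⁻¹ : Dˣ) : D)))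
        + (((u⁻¹ : Dˣ) : D) * (u : D)) * (X * ((u⁻¹ : Dˣ) : D)) := by
    noncomm_ring
  rw [h3, h1, h2]; noncomm_ring

private lemma aux_comm_pow (hmul : ∀ x y, d (x * y) = d x * y + x * d y)
    (X a : D) (ha : d a = X * a - a * X) (n : ℕ) :
    d (a ^ n) = X * a ^ n - a ^ n * X := by
  induction n with
  | zero => simp [aux_d_one d hmul]
  | succ n ih =>
      rw [pow_succ]
      exact aux_comm_mul d hmul X _ _ ih ha

private lemma aux_comm_zpow (hmul : ∀ x y, d (x * y) = d x * y + x * d y)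
    (X : D) (u : Dˣ) (hu : d (u : D) = X * (u : D) - (u : D) * X) (p : ℤ) :
    d ((u ^ p : Dˣ) : D) = X * ((u ^ p : Dˣ) : D) - ((u ^ p : Dˣ) : D) * X := by
  induction p using Int.induction_on with
  | zero => simp [aux_d_one d hmul]
  | succ n ih =>
      have h : (u ^ ((n : ℤ) + 1) : Dˣ) = u ^ (n : ℤ) * u := zpow_add_one u n
      rw [h, Units.val_mul]
      exact aux_comm_mul d hmul X _ _ ih hu
  | pred n ih =>
      have h : (u ^ (-(n : ℤ) - 1) : Dˣ) = u ^ (-(n : ℤ)) * u⁻¹ := zpow_sub_one u _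
      rw [h, Units.val_mul]
      exact aux_comm_mul d hmul X _ _ ih (aux_comm_inv d hmul X u hu)

private lemma aux_conj (hmul : ∀ x y, d (x * y) = d x * y + x * d y)
    (X : D) (Φ : Dˣ) (Ξ : D)
    (hΦ : d (Φ : D) = X * (Φ : D)) (hΞ : d Ξ = 0) :
    d ((Φ : D) * Ξ * ((Φ⁻¹ : Dˣ) : D))
      = X * ((Φ : D) * Ξ * ((Φ⁻¹ : Dˣ) : D))
        - ((Φ : D) * Ξ * ((Φ⁻¹ : Dˣ) : D)) * X := by
  have hinv : d ((Φ⁻¹ : Dˣ) : D) = -(((Φ⁻¹ : Dˣ) : D) * X) := by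
    rw [aux_d_inv d hmul Φ, hΦ]
    have h2 : (Φ : D) * ((Φ⁻¹ : Dˣ) : D) = 1 := Units.mul_inv Φ
    have h3 : -((Φ⁻¹ : Dˣ) : D) * (X * (Φ : D)) * ((Φ⁻¹ : Dˣ) : D)
        = -(((Φ⁻¹ : Dˣ) : D) * X * ((Φ : D) * ((Φ⁻¹ : Dˣ) : D))) := by noncomm_ring
    rw [h3, h2, mul_one]
  rw [hmul, hmul, hΦ, hΞ, hinv]
  noncomm_ring

private lemma aux_master {D : Type*} [Ring D] (d : D → D)
    (hmul : ∀ x y, d (x * y) = d x * y + x * d y)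
    (del Φ Φh : Dˣ) (Ξ Ξh : D)
    (hdel : d (del : D) = 0) (hΞ : d Ξ = 0) (hΞh : d Ξh = 0)
    (X Y : D)
    (hΦ : d (Φ : D) = X * (Φ : D)) (hΦh : d (Φh : D) = Y * (Φh : D)) :
    (d ((Φ * del * Φ⁻¹ : Dˣ) : D)
      = X * ((Φ * del * Φ⁻¹ : Dˣ) : D) - ((Φ * del * Φ⁻¹ : Dˣ) : D) * X) ∧
    (d ((Φh * del⁻¹ * Φh⁻¹ : Dˣ) : D)
      = Y * ((Φh * del⁻¹ * Φh⁻¹ : Dˣ) : D)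
        - ((Φh * del⁻¹ * Φh⁻¹ : Dˣ) : D) * Y) ∧
    (d ((Φ : D) * Ξ * ((Φ⁻¹ : Dˣ) : D))
      = X * ((Φ : D) * Ξ * ((Φ⁻¹ : Dˣ) : D))
        - ((Φ : D) * Ξ * ((Φ⁻¹ : Dˣ) : D)) * X) ∧
    (d ((Φh : D) * Ξh * ((Φh⁻¹ : Dˣ) : D))
      = Y * ((Φh : D) * Ξh * ((Φh⁻¹ : Dˣ) : D))
        - ((Φh : D) * Ξh * ((Φh⁻¹ : Dˣ) : D)) * Y) ∧
    (∀ (m : ℕ) (p : ℤ),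
      d (((Φ : D) * Ξ * ((Φ⁻¹ : Dˣ) : D)) ^ m * (((Φ * del * Φ⁻¹ : Dˣ) ^ p : Dˣ) : D)
        )
        = X * (((Φ : D) * Ξ * ((Φ⁻¹ : Dˣ) : D)) ^ m
            * (((Φ * del * Φ⁻¹ : Dˣ) ^ p : Dˣ) : D))
          - (((Φ : D) * Ξ * ((Φ⁻¹ : Dˣ) : D)) ^ m
            * (((Φ * del * Φ⁻¹ : Dˣ) ^ p : Dˣ) : D)) * X) ∧
    (∀ (m : ℕ) (p : ℤ),
      d (((Φh : D) * Ξh * ((Φh⁻¹ : Dˣ) : D)) ^ m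
          * (((Φh * del⁻¹ * Φh⁻¹ : Dˣ) ^ (-p) : Dˣ) : D))
        = Y * (((Φh : D) * Ξh * ((Φh⁻¹ : Dˣ) : D)) ^ m
            * (((Φh * del⁻¹ * Φh⁻¹ : Dˣ) ^ (-p) : Dˣ) : D))
          - (((Φh : D) * Ξh * ((Φh⁻¹ : Dˣ) : D)) ^ m
            * (((Φh * del⁻¹ * Φh⁻¹ : Dˣ) ^ (-p) : Dˣ) : D)) * Y) := by
  have hdelinv : d ((del⁻¹ : Dˣ) : D) = 0 := by
    rw [aux_d_inv d hmul del, hdel]; simp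
  have hP : d ((Φ * del * Φ⁻¹ : Dˣ) : D)
      = X * ((Φ * del * Φ⁻¹ : Dˣ) : D) - ((Φ * del * Φ⁻¹ : Dˣ) : D) * X := by
    simpa [Units.val_mul] using aux_conj d hmul X Φ (del : D) hΦ hdel
  have hPh : d ((Φh * del⁻¹ * Φh⁻¹ : Dˣ) : D)
      = Y * ((Φh * del⁻¹ * Φh⁻¹ : Dˣ) : D)
        - ((Φh * del⁻¹ * Φh⁻¹ : Dˣ) : D) * Y := by
    simpa [Units.val_mul] using aux_conj d hmul Y Φh ((del⁻¹ : Dˣ) : D) hΦh hdelinv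
  have hM := aux_conj d hmul X Φ Ξ hΦ hΞ
  have hMh := aux_conj d hmul Y Φh Ξh hΦh hΞh
  refine ⟨hP, hPh, hM, hMh, fun m p => ?_, fun m p => ?_⟩
  · exact aux_comm_mul d hmul X _ _ (aux_comm_pow d hmul X _ hM m)
      (aux_comm_zpow d hmul X _ hP p)
  · exact aux_comm_mul d hmul Y _ _ (aux_comm_pow d hmul Y _ hMh m)
      (aux_comm_zpow d hmul Y _ hPh (-p))

end AuxDer

theorem stmt_14 {D : Type*} [Ring D] {K : Type*} [Field K]
    {W : Type*} [AddCommGroup W] [Module K W]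
    (pos neg : D → D)
    (hsplit : ∀ x, pos x + neg x = x)
    (hpos_add : ∀ x y, pos (x + y) = pos x + pos y)
    (hpos_idem : ∀ x, pos (pos x) = pos x)
    (hpos_mul : ∀ x y, pos (pos x * pos y) = pos x * pos y)
    (hneg_mul : ∀ x y, neg (neg x * neg y) = neg x * neg y)
    (hpos_one : pos 1 = 1)
    (del Φ Φh : Dˣ)
    (hdel_pos : pos (del : D) = (del : D))
    -- the operators Ξ and Ξ̂ entering M = ΦΞΦ⁻¹ and M̂ = Φ̂Ξ̂Φ̂⁻¹
    (Ξ Ξh : D)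
    (hΞ_del : (del : D) * Ξ - Ξ * (del : D) = 1)
    (hΞh_del : (del : D) * Ξh - Ξh * (del : D) = 1)
    -- wave functions
    (act : D → W → W)
    (hact_add : ∀ x y w, act (x + y) w = act x w + act y w)
    (hact_addw : ∀ x w w', act x (w + w') = act x w + act x w')
    (hact_mul : ∀ x y w, act (x * y) w = act x (act y w))
    (hact_one : ∀ w, act 1 w = w)
    (z : Kˣ) (E Eh : W)
    (hE_del : act (del : D) E = (z : K) • E)
    (hEh_del : act (del : D) Eh = (z : K) • Eh)
    -- the additional flows on operators and on wave functions
    (S Sh : ℕ → ℤ → D → D) (Sw Shw : ℕ → ℤ → W → W)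
    (hS_add : ∀ m p x y, S m p (x + y) = S m p x + S m p y)
    (hS_mul : ∀ m p x y, S m p (x * y) = S m p x * y + x * S m p y)
    (hS_del : ∀ m p, S m p (del : D) = 0)
    (hS_Ξ : ∀ m p, S m p Ξ = 0) (hS_Ξh : ∀ m p, S m p Ξh = 0)
    (hSh_add : ∀ m p x y, Sh m p (x + y) = Sh m p x + Sh m p y)
    (hSh_mul : ∀ m p x y, Sh m p (x * y) = Sh m p x * y + x * Sh m p y)
    (hSh_del : ∀ m p, Sh m p (del : D) = 0)
    (hSh_Ξ : ∀ m p, Sh m p Ξ = 0) (hSh_Ξh : ∀ m p, Sh m p Ξh = 0)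
    (hSw_leib : ∀ m p x w, Sw m p (act x w) = act (S m p x) w + act x (Sw m p w))
    (hShw_leib : ∀ m p x w,
      Shw m p (act x w) = act (Sh m p x) w + act x (Shw m p w))
    (hSw_E : ∀ m p, Sw m p E = 0) (hSw_Eh : ∀ m p, Sw m p Eh = 0)
    (hShw_E : ∀ m p, Shw m p E = 0) (hShw_Eh : ∀ m p, Shw m p Eh = 0) :
    let P : Dˣ := Φ * del * Φ⁻¹
    let Ph : Dˣ := Φh * del⁻¹ * Φh⁻¹
    let M : D := (Φ : D) * Ξ * ((Φ⁻¹ : Dˣ) : D)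
    let Mh : D := (Φh : D) * Ξh * ((Φh⁻¹ : Dˣ) : D)
    let Bop : ℕ → ℤ → D := fun m p => M ^ m * ((P ^ p : Dˣ) : D)
    let Bhop : ℕ → ℤ → D := fun m p => Mh ^ m * ((Ph ^ (-p) : Dˣ) : D)
    let ψ : W := act (Φ : D) E
    let ψh : W := act (Φh : D) Eh
    -- the additional flows of the dressing operators:
    (∀ (m : ℕ) (p : ℤ), S m p (Φ : D) = -(neg (Bop m p)) * (Φ : D)) →
    (∀ (m : ℕ) (p : ℤ), S m p (Φh : D) = pos (Bop m p) * (Φh : D)) →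
    (∀ (m : ℕ) (p : ℤ), Sh m p (Φ : D) = -(neg (Bhop m p)) * (Φ : D)) →
    (∀ (m : ℕ) (p : ℤ), Sh m p (Φh : D) = pos (Bhop m p) * (Φh : D)) →
    -- conclusions, for Ḃ = B (flows S = ∂/∂β) and Ḃ = B̂ (flows Sh = ∂/∂β̂):
    (∀ (m : ℕ) (p : ℤ),
      -- on the Baker–Akhiezer functions
      (Sw m p ψ = -(act (neg (Bop m p)) ψ) ∧
       Shw m p ψ = -(act (neg (Bhop m p)) ψ) ∧
       Sw m p ψh = act (pos (Bop m p)) ψh ∧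
       Shw m p ψh = act (pos (Bhop m p)) ψh) ∧
      -- on P and P̂
      (S m p (P : D) = -(neg (Bop m p)) * (P : D) - (P : D) * -(neg (Bop m p)) ∧
       Sh m p (P : D)
         = -(neg (Bhop m p)) * (P : D) - (P : D) * -(neg (Bhop m p)) ∧
       S m p (Ph : D) = pos (Bop m p) * (Ph : D) - (Ph : D) * pos (Bop m p) ∧
       Sh m p (Ph : D)
         = pos (Bhop m p) * (Ph : D) - (Ph : D) * pos (Bhop m p)) ∧
      -- on M and M̂
      (S m p M = -(neg (Bop m p)) * M - M * -(neg (Bop m p)) ∧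
       Sh m p M = -(neg (Bhop m p)) * M - M * -(neg (Bhop m p)) ∧
       S m p Mh = pos (Bop m p) * Mh - Mh * pos (Bop m p) ∧
       Sh m p Mh = pos (Bhop m p) * Mh - Mh * pos (Bhop m p)) ∧
      -- on B_{m′p′} and B̂_{m′p′}
      (∀ (m' : ℕ) (p' : ℤ),
       S m p (Bop m' p')
         = -(neg (Bop m p)) * Bop m' p' - Bop m' p' * -(neg (Bop m p)) ∧
       Sh m p (Bop m' p')
         = -(neg (Bhop m p)) * Bop m' p' - Bop m' p' * -(neg (Bhop m p)) ∧
       S m p (Bhop m' p')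
         = pos (Bop m p) * Bhop m' p' - Bhop m' p' * pos (Bop m p) ∧
       Sh m p (Bhop m' p')
         = pos (Bhop m p) * Bhop m' p' - Bhop m' p' * pos (Bhop m p))) := by
  intro P Ph M Mh Bop Bhop ψ ψh h1 h2 h3 h4 m p
  -- action facts
  have hactw0 : ∀ x : D, act x (0 : W) = 0 := by
    intro x
    have h := hact_addw x 0 0
    rw [add_zero] at h
    have h2 : act x (0 : W) + 0 = act x 0 + act x 0 := by rw [add_zero]; exact h
    exact (add_left_cancel h2).symm
  have hact0 : ∀ w : W, act (0 : D) w = 0 := by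
    intro w
    have h := hact_add 0 0 w
    rw [add_zero] at h
    have h2 : act (0 : D) w + 0 = act 0 w + act 0 w := by rw [add_zero]; exact h
    exact (add_left_cancel h2).symm
  have hact_neg : ∀ (x : D) (w : W), act (-x) w = -(act x w) := by
    intro x w
    have h := hact_add x (-x) w
    rw [add_neg_cancel, hact0] at h
    exact (eq_neg_of_add_eq_zero_right h.symm)
  have key : ∀ (dW : W → W) (dD : D → D) (u : Dˣ) (w : W) (X : D),
      (∀ x w', dW (act x w') = act (dD x) w' + act x (dW w')) →
      dW w = 0 → dD (u : D) = X * (u : D) →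
      dW (act (u : D) w) = act X (act (u : D) w) := by
    intro dW dD u w X hleib hw hu
    rw [hleib, hw, hactw0, add_zero, hu, hact_mul]
  have HS := aux_master (S m p) (hS_mul m p) del Φ Φh Ξ Ξh (hS_del m p)
    (hS_Ξ m p) (hS_Ξh m p) (-(neg (Bop m p))) (pos (Bop m p)) (h1 m p) (h2 m p)
  have HSh := aux_master (Sh m p) (hSh_mul m p) del Φ Φh Ξ Ξh (hSh_del m p)
    (hSh_Ξ m p) (hSh_Ξh m p) (-(neg (Bhop m p))) (pos (Bhop m p)) (h3 m p) (h4 m p)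
  refine ⟨⟨?_, ?_, ?_, ?_⟩, ⟨HS.1, HSh.1, HS.2.1, HSh.2.1⟩,
    ⟨HS.2.2.1, HSh.2.2.1, HS.2.2.2.1, HSh.2.2.2.1⟩,
    fun m' p' => ⟨HS.2.2.2.2.1 m' p', HSh.2.2.2.2.1 m' p',
      HS.2.2.2.2.2 m' p', HSh.2.2.2.2.2 m' p'⟩⟩
  · exact (key (Sw m p) (S m p) Φ E (-(neg (Bop m p)))
      (hSw_leib m p) (hSw_E m p) (h1 m p)).trans (hact_neg _ _)
  · exact (key (Shw m p) (Sh m p) Φ E (-(neg (Bhop m p)))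
      (hShw_leib m p) (hShw_E m p) (h3 m p)).trans (hact_neg _ _)
  · exact key (Sw m p) (S m p) Φh Eh (pos (Bop m p))
      (hSw_leib m p) (hSw_Eh m p) (h2 m p)
  · exact key (Shw m p) (Sh m p) Φh Eh (pos (Bhop m p))
      (hShw_leib m p) (hShw_Eh m p) (h4 m p)
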